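/- Let X and Y be locally compact Hausdorff topological spaces and let T : C₀(X) → C₀(Y) be a lattice isomorphism. Then there exist a homeomorphism φ : Y → X and a continuous function a : Y → (0,∞) with 0 < inf a ≤ sup a < ∞ such that (T f)(y) = a(y) · f(φ(y)) for all f ∈ C₀(X) and all y ∈ Y. Moreover, the pair (a, φ) representing T in this fashion is unique. -/

import Mathlib

open ZeroAtInfty Filter Topology Metric Set

noncomputable section

/-- Pointwise supremum of two continuous functions vanishing at infinity. -/
def c0sup {X : Type*} [TopologicalSpace X] (f g : C₀(X, ℝ)) : C₀(X, ℝ) where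
  toFun := fun t => max (f t) (g t)
  continuous_toFun := (map_continuous f).max (map_continuous g)
  zero_at_infty' := by simpa using (zero_at_infty f).max (zero_at_infty g)

namespace LatIso

variable {X : Type*} [TopologicalSpace X]

@[simp] lemma c0sup_apply (f g : C₀(X, ℝ)) (x : X) : c0sup f g x = max (f x) (g x) := rfl

def c0inf (f g : C₀(X, ℝ)) : C₀(X, ℝ) where
  toFun := fun t => min (f t) (g t)
  continuous_toFun := (map_continuous f).min (map_continuous g)
  zero_at_infty' := by simpa using (zero_at_infty f).min (zero_at_infty g)

@[simp] lemma c0inf_apply (f g : C₀(X, ℝ)) (x : X) : c0inf f g x = min (f x) (g x) := rfl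

/-- `(f - ε)⁺` as an element of `C₀`. -/
def c0cut (f : C₀(X, ℝ)) (ε : ℝ) (hε : 0 ≤ ε) : C₀(X, ℝ) where
  toFun := fun t => max (f t - ε) 0
  continuous_toFun := ((map_continuous f).sub continuous_const).max continuous_const
  zero_at_infty' := by
    have h0 : Tendsto (⇑f) (cocompact X) (𝓝 0) := zero_at_infty f
    have h := (h0.sub_const ε).max (tendsto_const_nhds (x := (0:ℝ)))
    have heq : ((0:ℝ) - ε) ⊔ 0 = 0 := max_eq_right (by linarith)
    rw [heq] at h
    exact h

@[simp] lemma c0cut_apply (f : C₀(X, ℝ)) (ε : ℝ) (hε : 0 ≤ ε) (x : X) :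
    c0cut f ε hε x = max (f x - ε) 0 := rfl

lemma c0inf_eq (f g : C₀(X, ℝ)) : c0inf f g = f + g - c0sup f g := by
  ext x
  simp only [c0inf_apply, ZeroAtInftyContinuousMap.coe_sub, ZeroAtInftyContinuousMap.coe_add,
    Pi.sub_apply, Pi.add_apply, c0sup_apply]
  rcases le_total (f x) (g x) with h | h <;> simp [min_eq_left, min_eq_right, max_eq_left,
    max_eq_right, h] <;> ring

section Functional

variable (φ : C₀(X, ℝ) →ₗ[ℝ] ℝ)
  (hsup : ∀ f g : C₀(X, ℝ), φ (c0sup f g) = max (φ f) (φ g))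

include hsup

lemma phi_nonneg {f : C₀(X, ℝ)} (hf : ∀ x, 0 ≤ f x) : 0 ≤ φ f := by
  have h : c0sup f 0 = f := by
    ext x; simpa using max_eq_left (hf x)
  have := hsup f 0
  rw [h, map_zero] at this
  rw [this]; exact le_max_right _ _

lemma phi_inf (f g : C₀(X, ℝ)) : φ (c0inf f g) = min (φ f) (φ g) := by
  have h1 : φ (c0inf f g) = φ f + φ g - φ (c0sup f g) := by
    rw [c0inf_eq]; simp [map_sub, map_add]
  rw [h1, hsup]
  rcases le_total (φ f) (φ g) with h | h <;>
    simp [max_eq_left, max_eq_right, min_eq_left, min_eq_right, h] <;> ring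

/-- Lemma A: domination by a finite sum of functions on whose "ideals" φ vanishes. -/
lemma lemA {ι : Type*} (s : Finset ι) (g : ι → C₀(X, ℝ))
    (hg0 : ∀ i ∈ s, ∀ x, 0 ≤ g i x)
    (hg : ∀ i ∈ s, ∀ h : C₀(X, ℝ), (∀ x, 0 ≤ h x) → (∀ x, h x ≤ g i x) → φ h = 0) :
    ∀ f : C₀(X, ℝ), (∀ x, 0 ≤ f x) → (∀ x, f x ≤ ∑ i ∈ s, g i x) → φ f = 0 := by
  classical
  induction s using Finset.induction_on with
  | empty =>
    intro f hf0 hfle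
    have : f = 0 := by
      ext x
      have := hfle x
      simp only [Finset.sum_empty] at this
      exact le_antisymm this (hf0 x) |>.trans rfl
    rw [this, map_zero]
  | @insert i s' hi ih =>
    intro f hf0 hfle
    set a := c0inf f (g i) with ha
    have hga : φ a = 0 := by
      refine hg i (Finset.mem_insert_self i s') a (fun x => ?_) (fun x => ?_)
      · simp only [ha, c0inf_apply, le_min_iff]
        exact ⟨hf0 x, hg0 i (Finset.mem_insert_self i s') x⟩
      · simp [ha]
    have hb : φ (f - a) = 0 := by
      refine ih (fun j hj => hg0 j (Finset.mem_insert_of_mem hj))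
        (fun j hj => hg j (Finset.mem_insert_of_mem hj)) (f - a) (fun x => ?_) (fun x => ?_)
      · simp only [ZeroAtInftyContinuousMap.coe_sub, Pi.sub_apply, ha, c0inf_apply, sub_nonneg]
        exact min_le_left _ _
      · have hx := hfle x
        rw [Finset.sum_insert hi] at hx
        simp only [ZeroAtInftyContinuousMap.coe_sub, Pi.sub_apply, ha, c0inf_apply]
        rcases le_total (f x) (g i x) with h | h
        · rw [min_eq_left h]
          simp only [sub_self]
          exact Finset.sum_nonneg fun j hj => hg0 j (Finset.mem_insert_of_mem hj) x
        · rw [min_eq_right h]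
          linarith [Finset.sum_nonneg fun j hj => hg0 j (Finset.mem_insert_of_mem hj) x]
    have : φ f = φ a + φ (f - a) := by simp [map_sub]
    rw [this, hga, hb, add_zero]

end Functional

section LCH

variable [LocallyCompactSpace X] [T2Space X]

lemma exists_bump {K U : Set X} (hK : IsCompact K) (hU : IsOpen U) (hKU : K ⊆ U) :
    ∃ f : C₀(X, ℝ), (∀ x, f x ∈ Set.Icc (0:ℝ) 1) ∧ (∀ x ∈ K, f x = 1) ∧ (∀ x ∉ U, f x = 0) := by
  obtain ⟨f, h1, h0, hcs, hrange⟩ := exists_continuous_one_zero_of_isCompact hK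
    hU.isClosed_compl (disjoint_compl_right_iff_subset.mpr hKU)
  exact ⟨{ toContinuousMap := f, zero_at_infty' := hcs.is_zero_at_infty },
    hrange, fun x hx => h1 hx, fun x hx => h0 hx⟩

lemma exists_compact_lt (f : C₀(X, ℝ)) {ε : ℝ} (hε : 0 < ε) :
    ∃ K : Set X, IsCompact K ∧ ∀ x ∉ K, |f x| < ε := by
  have h0 : Tendsto (⇑f) (cocompact X) (𝓝 0) := zero_at_infty f
  have h := h0 (Metric.ball_mem_nhds (0:ℝ) hε)
  rw [mem_map, mem_cocompact] at h
  obtain ⟨K, hK, hKs⟩ := h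
  refine ⟨K, hK, fun x hx => ?_⟩
  have := hKs hx
  simpa [Real.dist_eq] using this

variable (φ : C₀(X, ℝ) →ₗ[ℝ] ℝ)
  (hsup : ∀ f g : C₀(X, ℝ), φ (c0sup f g) = max (φ f) (φ g))

include hsup

lemma lemCover (f : C₀(X, ℝ)) (hf0 : ∀ x, 0 ≤ f x) (K : Set X) (hK : IsCompact K)
    (hss : ∀ x ∉ K, f x = 0)
    (hgood : ∀ x ∈ K, ∃ V : Set X, IsOpen V ∧ x ∈ V ∧
      ∀ h : C₀(X, ℝ), (∀ z, 0 ≤ h z) → (∀ z ∉ V, h z = 0) → φ h = 0) :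
    φ f = 0 := by
  classical
  have key : ∀ x : K, ∃ (W : Set X) (u : C₀(X, ℝ)), IsOpen W ∧ (x : X) ∈ W ∧
      (∀ z, 0 ≤ u z) ∧ (∀ z, u z ≤ 1) ∧ (∀ z ∈ W, u z = 1) ∧
      (∀ h : C₀(X, ℝ), (∀ z, 0 ≤ h z) → (∀ z, h z ≤ ‖f‖ * u z) → φ h = 0) := by
    rintro ⟨x, hx⟩
    obtain ⟨V, hVo, hxV, hV⟩ := hgood x hx
    obtain ⟨C, hCc, hxC, hCV⟩ := exists_compact_subset hVo hxV
    obtain ⟨u, hu01, huC, huV⟩ := exists_bump hCc hVo hCV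
    refine ⟨interior C, u, isOpen_interior, hxC, fun z => (hu01 z).1, fun z => (hu01 z).2,
      fun z hz => huC z (interior_subset hz), fun h h0 hle => ?_⟩
    refine hV h h0 (fun z hz => ?_)
    have h1 := hle z
    rw [huV z hz, mul_zero] at h1
    exact le_antisymm h1 (h0 z)
  choose W u hWo hWmem hu0 hu1 hW1 hvan using key
  obtain ⟨t, ht⟩ := hK.elim_finite_subcover W hWo
    (fun x hx => Set.mem_iUnion.mpr ⟨⟨x, hx⟩, hWmem ⟨x, hx⟩⟩)
  refine lemA φ hsup t (fun i => ‖f‖ • u i) (fun i _ z => ?_) (fun i _ h h0 hle => ?_) f hf0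
    (fun z => ?_)
  · simp only [ZeroAtInftyContinuousMap.coe_smul, Pi.smul_apply, smul_eq_mul]
    exact mul_nonneg (norm_nonneg f) (hu0 i z)
  · refine hvan i h h0 (fun z => ?_)
    have := hle z
    simpa [ZeroAtInftyContinuousMap.coe_smul] using this
  · by_cases hz : z ∈ K
    · obtain ⟨i, hit, hiW⟩ := Set.mem_iUnion₂.mp (ht hz)
      have h1 : f z ≤ ‖f‖ * u i z := by
        rw [hW1 i z hiW, mul_one]
        calc f z ≤ |f z| := le_abs_self _
          _ ≤ ‖f‖ := by
            have := f.toBCF.norm_coe_le_norm z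
            simpa [ZeroAtInftyContinuousMap.norm_toBCF_eq_norm] using this
      calc f z ≤ (‖f‖ • u i) z := by
            simpa [ZeroAtInftyContinuousMap.coe_smul] using h1
        _ ≤ ∑ j ∈ t, (‖f‖ • u j) z := by
            refine Finset.single_le_sum (f := fun j => (‖f‖ • u j) z) (fun j _ => ?_) hit
            simp only [ZeroAtInftyContinuousMap.coe_smul, Pi.smul_apply, smul_eq_mul]
            exact mul_nonneg (norm_nonneg f) (hu0 j z)
    · rw [hss z hz]
      refine Finset.sum_nonneg (fun j _ => ?_)
      simp only [ZeroAtInftyContinuousMap.coe_smul, Pi.smul_apply, smul_eq_mul]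
      exact mul_nonneg (norm_nonneg f) (hu0 j z)

/-- Every point other than a "bad" point is good. -/
lemma good_of_ne {x₀ : X}
    (hbad : ∀ V : Set X, IsOpen V → x₀ ∈ V →
      ∃ h : C₀(X, ℝ), (∀ z, 0 ≤ h z) ∧ (∀ z ∉ V, h z = 0) ∧ φ h ≠ 0)
    {x : X} (hx : x ≠ x₀) :
    ∃ V : Set X, IsOpen V ∧ x ∈ V ∧
      ∀ h : C₀(X, ℝ), (∀ z, 0 ≤ h z) → (∀ z ∉ V, h z = 0) → φ h = 0 := by
  obtain ⟨U, V, hUo, hVo, hxU, hx0V, hUV⟩ := t2_separation hx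
  refine ⟨U, hUo, hxU, fun h h0 hvanish => ?_⟩
  by_contra hne
  obtain ⟨h', h'0, h'van, h'ne⟩ := hbad V hVo hx0V
  have hposh : 0 < φ h := lt_of_le_of_ne (phi_nonneg φ hsup h0) (Ne.symm hne)
  have hposh' : 0 < φ h' := lt_of_le_of_ne (phi_nonneg φ hsup h'0) (Ne.symm h'ne)
  have hinf0 : c0inf h h' = 0 := by
    ext z
    by_cases hzU : z ∈ U
    · have : z ∉ V := fun hzV => (Set.disjoint_left.mp hUV hzU) hzV
      simp [h'van z this, min_eq_right (h0 z)]
    · simp [hvanish z hzU, min_eq_left (h'0 z)]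
  have heq := phi_inf φ hsup h h'
  rw [hinf0, map_zero] at heq
  have hlt : (0:ℝ) < min (φ h) (φ h') := lt_min hposh hposh'
  rw [← heq] at hlt
  exact lt_irrefl 0 hlt

lemma lemPoint {M : ℝ} (hM : ∀ f, |φ f| ≤ M * ‖f‖) (hone : ∃ g, φ g = 1) :
    ∃ (x₀ : X) (c : ℝ), 0 < c ∧ ∀ f : C₀(X, ℝ), φ f = c * f x₀ := by
  classical
  obtain ⟨g, hg⟩ := hone
  set G : C₀(X, ℝ) := c0sup g (-g) with hGdef
  have hG0 : ∀ z, 0 ≤ G z := by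
    intro z
    simp only [hGdef, c0sup_apply, ZeroAtInftyContinuousMap.coe_neg, Pi.neg_apply]
    rcases le_total 0 (g z) with h | h
    · exact le_max_of_le_left h
    · exact le_max_of_le_right (by linarith)
  have hGφ : φ G = 1 := by
    have := hsup g (-g)
    rw [map_neg, hg] at this
    rw [hGdef, this]; norm_num
  have hMpos : 0 < M := by
    have h1 := hM G
    rw [hGφ] at h1
    nlinarith [norm_nonneg G, abs_nonneg (1:ℝ), le_abs_self (1:ℝ)]
  -- existence of a bad point
  have hbad : ∃ x₀ : X, ∀ V : Set X, IsOpen V → x₀ ∈ V →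
      ∃ h : C₀(X, ℝ), (∀ z, 0 ≤ h z) ∧ (∀ z ∉ V, h z = 0) ∧ φ h ≠ 0 := by
    by_contra hcon
    push_neg at hcon
    -- every point is good
    have hgood : ∀ x : X, ∃ V : Set X, IsOpen V ∧ x ∈ V ∧
        ∀ h : C₀(X, ℝ), (∀ z, 0 ≤ h z) → (∀ z ∉ V, h z = 0) → φ h = 0 := by
      intro x
      obtain ⟨V, hVo, hxV, hV⟩ := hcon x
      exact ⟨V, hVo, hxV, fun h h0 hv => hV h h0 hv⟩
    set ε : ℝ := 1 / (2 * M) with hεdef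
    have hε : 0 < ε := by positivity
    obtain ⟨K, hK, hKlt⟩ := exists_compact_lt G hε
    set F : C₀(X, ℝ) := c0cut G ε hε.le with hFdef
    have hF : φ F = 0 := by
      refine lemCover φ hsup F (fun z => le_max_right _ _) K hK (fun z hz => ?_)
        (fun x _ => hgood x)
      have := hKlt z hz
      have : G z - ε < 0 := by
        have := abs_lt.mp this
        linarith [this.2]
      simp only [hFdef, c0cut_apply]
      exact max_eq_right this.le
    have hGF : ‖G - F‖ ≤ ε := by
      rw [← ZeroAtInftyContinuousMap.norm_toBCF_eq_norm]
      refine BoundedContinuousFunction.norm_le hε.le |>.mpr (fun z => ?_)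
      have h1 : (G - F) z = G z - max (G z - ε) 0 := by
        simp [hFdef, ZeroAtInftyContinuousMap.coe_sub]
      have h2 : G z - max (G z - ε) 0 = min (G z) ε := by
        rcases le_total (G z) ε with h | h
        · rw [max_eq_right (by linarith), min_eq_left h]; ring
        · rw [max_eq_left (by linarith), min_eq_right h]; ring
      show ‖(G - F).toBCF z‖ ≤ ε
      have h3 : (G - F).toBCF z = (G - F) z := rfl
      rw [h3, h1, h2, Real.norm_eq_abs, abs_of_nonneg (le_min (hG0 z) hε.le)]
      exact min_le_right _ _
    have h4 : φ G = φ F + φ (G - F) := by simp [map_sub]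
    have h5 : |φ (G - F)| ≤ M * ε := by
      calc |φ (G - F)| ≤ M * ‖G - F‖ := hM _
        _ ≤ M * ε := by nlinarith
    rw [hGφ, hF, zero_add] at h4
    have h6 : (1:ℝ) ≤ M * ε := by
      rw [h4]
      exact (le_abs_self _).trans h5
    rw [hεdef] at h6
    have h7 : M * (1 / (2 * M)) = 1 / 2 := by
      field_simp
    linarith
  obtain ⟨x₀, hx₀⟩ := hbad
  -- vanishing at x₀ implies φ f = 0, for nonneg f
  have hvanish : ∀ f : C₀(X, ℝ), (∀ z, 0 ≤ f z) → f x₀ = 0 → φ f = 0 := by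
    intro f hf0 hfx
    have hbound : ∀ ε : ℝ, 0 < ε → |φ f| ≤ M * ε := by
      intro ε hε
      obtain ⟨K, hK, hKlt⟩ := exists_compact_lt f hε
      set K' : Set X := K ∩ {x | ε ≤ f x} with hK'def
      have hK' : IsCompact K' := hK.inter_right (isClosed_le continuous_const (map_continuous f))
      set F : C₀(X, ℝ) := c0cut f ε hε.le with hFdef
      have hF : φ F = 0 := by
        refine lemCover φ hsup F (fun z => le_max_right _ _) K' hK' (fun z hz => ?_)
          (fun x hx => ?_)
        · have hlt : f z < ε := by
            by_cases hzK : z ∈ K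
            · have hmem : z ∉ {x | ε ≤ f x} := fun hmem => hz ⟨hzK, hmem⟩
              simp only [Set.mem_setOf_eq] at hmem
              exact not_le.mp hmem
            · exact (le_abs_self (f z)).trans_lt (hKlt z hzK)
          simp only [hFdef, c0cut_apply]
          exact max_eq_right (by linarith)
        · have hne : x ≠ x₀ := by
            rintro rfl
            have : ε ≤ f x := hx.2
            rw [hfx] at this; linarith
          exact good_of_ne φ hsup hx₀ hne
      have hfF : ‖f - F‖ ≤ ε := by
        rw [← ZeroAtInftyContinuousMap.norm_toBCF_eq_norm]
        refine BoundedContinuousFunction.norm_le hε.le |>.mpr (fun z => ?_)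
        have h1 : (f - F) z = f z - max (f z - ε) 0 := by
          simp [hFdef, ZeroAtInftyContinuousMap.coe_sub]
        have h2 : f z - max (f z - ε) 0 = min (f z) ε := by
          rcases le_total (f z) ε with h | h
          · rw [max_eq_right (by linarith), min_eq_left h]; ring
          · rw [max_eq_left (by linarith), min_eq_right h]; ring
        show ‖(f - F).toBCF z‖ ≤ ε
        have h3 : (f - F).toBCF z = (f - F) z := rfl
        rw [h3, h1, h2, Real.norm_eq_abs, abs_of_nonneg (le_min (hf0 z) hε.le)]
        exact min_le_right _ _
      have h4 : φ f = φ F + φ (f - F) := by simp [map_sub]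
      rw [hF, zero_add] at h4
      rw [h4]
      calc |φ (f - F)| ≤ M * ‖f - F‖ := hM _
        _ ≤ M * ε := by nlinarith
    by_contra hne
    have habs : 0 < |φ f| := abs_pos.mpr hne
    have := hbound (|φ f| / (2 * M)) (by positivity)
    have hMeq : M * (|φ f| / (2 * M)) = |φ f| / 2 := by field_simp
    linarith [hMeq ▸ this]
  -- G x₀ > 0
  have hGx₀ : 0 < G x₀ := by
    rcases lt_or_eq_of_le (hG0 x₀) with h | h
    · exact h
    · exfalso
      have := hvanish G hG0 h.symm
      rw [hGφ] at this; linarith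
  refine ⟨x₀, 1 / G x₀, by positivity, fun f => ?_⟩
  set d : ℝ := f x₀ / G x₀ with hddef
  set h : C₀(X, ℝ) := f - d • G with hhdef
  have hhx₀ : h x₀ = 0 := by
    simp only [hhdef, ZeroAtInftyContinuousMap.coe_sub, Pi.sub_apply,
      ZeroAtInftyContinuousMap.coe_smul, Pi.smul_apply, smul_eq_mul, hddef]
    field_simp
    ring
  set hp : C₀(X, ℝ) := c0sup h 0 with hpdef
  set hm : C₀(X, ℝ) := c0sup (-h) 0 with hmdef
  have hsplit : h = hp - hm := by
    ext z
    simp only [hpdef, hmdef, ZeroAtInftyContinuousMap.coe_sub, Pi.sub_apply, c0sup_apply,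
      ZeroAtInftyContinuousMap.coe_neg, Pi.neg_apply, ZeroAtInftyContinuousMap.coe_zero,
      Pi.zero_apply]
    rcases le_total (h z) 0 with hz | hz
    · rw [max_eq_right hz, max_eq_left (by linarith)]; ring
    · rw [max_eq_left hz, max_eq_right (by linarith)]; ring
  have hφp : φ hp = 0 := by
    refine hvanish hp (fun z => le_max_right _ _) ?_
    simp only [hpdef, c0sup_apply, ZeroAtInftyContinuousMap.coe_zero, Pi.zero_apply, hhx₀]
    exact max_self 0
  have hφm : φ hm = 0 := by
    refine hvanish hm (fun z => le_max_right _ _) ?_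
    simp only [hmdef, c0sup_apply, ZeroAtInftyContinuousMap.coe_neg, Pi.neg_apply,
      ZeroAtInftyContinuousMap.coe_zero, Pi.zero_apply, hhx₀]
    simp
  have hφh : φ h = 0 := by rw [hsplit, map_sub, hφp, hφm, sub_zero]
  have : φ f = φ h + d * φ G := by
    simp only [hhdef, map_sub, map_smul, smul_eq_mul]
    ring
  rw [this, hφh, hGφ, zero_add, mul_one, hddef]
  ring

omit hsup in
lemma point_unique {x x' : X} {c c' : ℝ} (hc : 0 < c) (hc' : 0 < c')
    (h : ∀ f : C₀(X, ℝ), c * f x = c' * f x') : x = x' ∧ c = c' := by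
  have hxx : x = x' := by
    by_contra hne
    obtain ⟨f, _, hf1, hf0⟩ := exists_bump (isCompact_singleton (x := x))
      (isOpen_compl_singleton (x := x')) (Set.singleton_subset_iff.mpr hne)
    have := h f
    rw [hf1 x rfl, hf0 x' (by simp), mul_one, mul_zero] at this
    exact hc.ne' this
  subst hxx
  obtain ⟨f, _, hf1, _⟩ := exists_bump (isCompact_singleton (x := x)) isOpen_univ
    (Set.subset_univ _)
  have := h f
  rw [hf1 x rfl, mul_one, mul_one] at this
  exact ⟨rfl, this⟩

end LCH

end LatIso

set_option maxHeartbeats 1000000 in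
open LatIso in
/-- **Proposition 1.1.** Any lattice isomorphism `T : C₀(X) → C₀(Y)` (for `X`, `Y`
locally compact Hausdorff) is a weighted composition operator `T f = a · (f ∘ φ)`,
where `φ : Y → X` is a homeomorphism and `a : Y → (0, ∞)` is continuous with
`0 < inf a ≤ sup a < ∞`; moreover the pair `(a, φ)` is unique. -/
theorem stmt0 {X Y : Type*} [TopologicalSpace X] [LocallyCompactSpace X] [T2Space X]
    [TopologicalSpace Y] [LocallyCompactSpace Y] [T2Space Y]
    (T : C₀(X, ℝ) ≃L[ℝ] C₀(Y, ℝ))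
    (hT : ∀ f g : C₀(X, ℝ), T (c0sup f g) = c0sup (T f) (T g)) :
    ∃! p : (Y → ℝ) × (Y ≃ₜ X),
      Continuous p.1 ∧ (∃ c > 0, ∀ y, c ≤ p.1 y) ∧ (∃ C : ℝ, ∀ y, p.1 y ≤ C) ∧
        ∀ (f : C₀(X, ℝ)) (y : Y), T f y = p.1 y * f (p.2 y) := by
  classical
  rcases isEmpty_or_nonempty Y with hYe | hYne
  · -- Y empty: X must be empty too
    have hXe : IsEmpty X := by
      refine ⟨fun x => ?_⟩
      obtain ⟨f, _, hf1, _⟩ := exists_bump (isCompact_singleton (x := x)) isOpen_univ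
        (Set.subset_univ _)
      have hTf : T f = T 0 := by ext y; exact isEmptyElim y
      have hf0 : f = 0 := T.injective hTf
      have := hf1 x rfl
      rw [hf0] at this
      simpa using this
    refine ⟨(fun _ => (1:ℝ), ⟨Equiv.equivOfIsEmpty Y X, ?_, ?_⟩), ⟨continuous_const,
      ⟨1, one_pos, fun y => isEmptyElim y⟩, ⟨1, fun y => isEmptyElim y⟩,
      fun f y => isEmptyElim y⟩, ?_⟩
    · rw [continuous_def]
      intro s _
      rw [show (Equiv.equivOfIsEmpty Y X).toFun ⁻¹' s = ∅ from Set.eq_empty_of_isEmpty _]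
      exact isOpen_empty
    · rw [continuous_def]
      intro s _
      rw [show (Equiv.equivOfIsEmpty Y X).invFun ⁻¹' s = ∅ from Set.eq_empty_of_isEmpty _]
      exact isOpen_empty
    · rintro ⟨a', e'⟩ _
      simp only [Prod.mk.injEq]
      exact ⟨funext fun y => isEmptyElim y, Homeomorph.ext fun y => isEmptyElim y⟩
  · -- main case
    set Tc : C₀(X, ℝ) →L[ℝ] C₀(Y, ℝ) := (T : C₀(X, ℝ) →L[ℝ] C₀(Y, ℝ)) with hTc
    set Sc : C₀(Y, ℝ) →L[ℝ] C₀(X, ℝ) := (T.symm : C₀(Y, ℝ) →L[ℝ] C₀(X, ℝ)) with hSc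
    have hT' : ∀ u v : C₀(Y, ℝ), T.symm (c0sup u v) = c0sup (T.symm u) (T.symm v) := by
      intro u v
      apply T.injective
      rw [hT, T.apply_symm_apply, T.apply_symm_apply, T.apply_symm_apply]
    have hrep : ∀ y : Y, ∃ (x : X) (c : ℝ), 0 < c ∧ ∀ f : C₀(X, ℝ), T f y = c * f x := by
      intro y
      set φ : C₀(X, ℝ) →ₗ[ℝ] ℝ :=
        { toFun := fun f => T f y
          map_add' := by intro f g; show T (f + g) y = T f y + T g y; rw [map_add]; rfl
          map_smul' := by intro c f; show T (c • f) y = c • (T f y); rw [map_smul]; rfl } with hφ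
      have hsupφ : ∀ f g : C₀(X, ℝ), φ (c0sup f g) = max (φ f) (φ g) := by
        intro f g
        show T (c0sup f g) y = max (T f y) (T g y)
        rw [hT]; rfl
      have hMφ : ∀ f, |φ f| ≤ ‖Tc‖ * ‖f‖ := by
        intro f
        have h1 : |T f y| ≤ ‖T f‖ := by
          have := (T f).toBCF.norm_coe_le_norm y
          simpa [ZeroAtInftyContinuousMap.norm_toBCF_eq_norm] using this
        have h2 : ‖T f‖ ≤ ‖Tc‖ * ‖f‖ := by
          have := Tc.le_opNorm f
          simpa [hTc] using this
        exact h1.trans h2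
      have honeφ : ∃ g, φ g = 1 := by
        obtain ⟨g, _, hg1, _⟩ := exists_bump (isCompact_singleton (x := y)) isOpen_univ
          (Set.subset_univ _)
        refine ⟨T.symm g, ?_⟩
        show T (T.symm g) y = 1
        rw [T.apply_symm_apply]
        exact hg1 y rfl
      obtain ⟨x, c, hc, hcf⟩ := lemPoint φ hsupφ hMφ honeφ
      exact ⟨x, c, hc, fun f => hcf f⟩
    choose σ a hapos haeq using hrep
    have hrep' : ∀ x : X, ∃ (y : Y) (c : ℝ), 0 < c ∧ ∀ g : C₀(Y, ℝ), T.symm g x = c * g y := by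
      intro x
      set φ : C₀(Y, ℝ) →ₗ[ℝ] ℝ :=
        { toFun := fun g => T.symm g x
          map_add' := by
            intro f g
            show T.symm (f + g) x = T.symm f x + T.symm g x
            rw [map_add]; rfl
          map_smul' := by
            intro c f
            show T.symm (c • f) x = c • (T.symm f x)
            rw [map_smul]; rfl } with hφ
      have hsupφ : ∀ f g : C₀(Y, ℝ), φ (c0sup f g) = max (φ f) (φ g) := by
        intro f g
        show T.symm (c0sup f g) x = max (T.symm f x) (T.symm g x)
        rw [hT']; rfl
      have hMφ : ∀ g, |φ g| ≤ ‖Sc‖ * ‖g‖ := by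
        intro g
        have h1 : |T.symm g x| ≤ ‖T.symm g‖ := by
          have := (T.symm g).toBCF.norm_coe_le_norm x
          simpa [ZeroAtInftyContinuousMap.norm_toBCF_eq_norm] using this
        have h2 : ‖T.symm g‖ ≤ ‖Sc‖ * ‖g‖ := by
          have := Sc.le_opNorm g
          simpa [hSc] using this
        exact h1.trans h2
      have honeφ : ∃ g, φ g = 1 := by
        obtain ⟨g, _, hg1, _⟩ := exists_bump (isCompact_singleton (x := x)) isOpen_univ
          (Set.subset_univ _)
        refine ⟨T g, ?_⟩
        show T.symm (T g) x = 1
        rw [T.symm_apply_apply]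
        exact hg1 x rfl
      obtain ⟨y, c, hc, hcf⟩ := lemPoint φ hsupφ hMφ honeφ
      exact ⟨y, c, hc, fun g => hcf g⟩
    choose τ b hbpos hbeq using hrep'
    -- inverse identities
    have hid1 : ∀ x : X, σ (τ x) = x ∧ b x * a (τ x) = 1 := by
      intro x
      have hxx : ∀ f : C₀(X, ℝ), (1:ℝ) * f x = (b x * a (τ x)) * f (σ (τ x)) := by
        intro f
        have h1 : T.symm (T f) x = b x * (T f) (τ x) := hbeq x (T f)
        rw [T.symm_apply_apply, haeq (τ x) f] at h1
        rw [one_mul, h1]; ring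
      have hpu := point_unique one_pos (mul_pos (hbpos x) (hapos (τ x))) hxx
      exact ⟨hpu.1.symm, hpu.2.symm⟩
    have hid2 : ∀ y : Y, τ (σ y) = y ∧ a y * b (σ y) = 1 := by
      intro y
      have hyy : ∀ g : C₀(Y, ℝ), (1:ℝ) * g y = (a y * b (σ y)) * g (τ (σ y)) := by
        intro g
        have h1 : T (T.symm g) y = a y * (T.symm g) (σ y) := haeq y (T.symm g)
        rw [T.apply_symm_apply, hbeq (σ y) g] at h1
        rw [one_mul, h1]; ring
      have hpu := point_unique one_pos (mul_pos (hapos y) (hbpos (σ y))) hyy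
      exact ⟨hpu.1.symm, hpu.2.symm⟩
    -- continuity of σ
    have hσc : Continuous σ := by
      rw [continuous_def]
      intro U hU
      rw [isOpen_iff_mem_nhds]
      intro y hy
      obtain ⟨fb, hfb01, hfb1, hfb0⟩ := exists_bump (isCompact_singleton (x := σ y)) hU
        (Set.singleton_subset_iff.mpr hy)
      refine mem_nhds_iff.mpr ⟨{y' | 0 < T fb y'}, fun y' hy' => ?_,
        isOpen_lt continuous_const (map_continuous (T fb)), ?_⟩
      · simp only [Set.mem_setOf_eq] at hy'
        rw [haeq y' fb] at hy'
        by_contra hnot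
        rw [hfb0 _ hnot, mul_zero] at hy'
        exact lt_irrefl 0 hy'
      · show (0:ℝ) < T fb y
        rw [haeq y fb, hfb1 (σ y) rfl, mul_one]
        exact hapos y
    have hτc : Continuous τ := by
      rw [continuous_def]
      intro U hU
      rw [isOpen_iff_mem_nhds]
      intro x hx
      obtain ⟨gb, hgb01, hgb1, hgb0⟩ := exists_bump (isCompact_singleton (x := τ x)) hU
        (Set.singleton_subset_iff.mpr hx)
      refine mem_nhds_iff.mpr ⟨{x' | 0 < T.symm gb x'}, fun x' hx' => ?_,
        isOpen_lt continuous_const (map_continuous (T.symm gb)), ?_⟩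
      · simp only [Set.mem_setOf_eq] at hx'
        rw [hbeq x' gb] at hx'
        by_contra hnot
        rw [hgb0 _ hnot, mul_zero] at hx'
        exact lt_irrefl 0 hx'
      · show (0:ℝ) < T.symm gb x
        rw [hbeq x gb, hgb1 (τ x) rfl, mul_one]
        exact hbpos x
    set e : Y ≃ₜ X :=
      { toFun := σ
        invFun := τ
        left_inv := fun y => (hid2 y).1
        right_inv := fun x => (hid1 x).1
        continuous_toFun := hσc
        continuous_invFun := hτc } with he
    -- continuity of a
    have hac : Continuous a := by
      rw [continuous_iff_continuousAt]
      intro y₀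
      obtain ⟨fb, hfb01, hfb1, _⟩ := exists_bump (isCompact_singleton (x := σ y₀)) isOpen_univ
        (Set.subset_univ _)
      have hWo : IsOpen (σ ⁻¹' {x | 0 < fb x}) :=
        (isOpen_lt continuous_const (map_continuous fb)).preimage hσc
      have hyW : y₀ ∈ σ ⁻¹' {x | 0 < fb x} := by
        simp only [Set.mem_preimage, Set.mem_setOf_eq, hfb1 (σ y₀) rfl]
        exact one_pos
      have hq : ContinuousAt (fun y => T fb y / fb (σ y)) y₀ := by
        refine ContinuousAt.div (map_continuous (T fb)).continuousAt
          ((map_continuous fb).comp hσc).continuousAt ?_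
        show fb (σ y₀) ≠ 0
        rw [hfb1 (σ y₀) rfl]
        exact one_ne_zero
      refine hq.congr (Filter.eventuallyEq_of_mem (hWo.mem_nhds hyW) (fun y hy => ?_))
      simp only [Set.mem_preimage, Set.mem_setOf_eq] at hy
      rw [haeq y fb]
      field_simp
    -- bounds
    have hble : ∀ x, b x ≤ ‖Sc‖ := by
      intro x
      obtain ⟨gb, hgb01, hgb1, _⟩ := exists_bump (isCompact_singleton (x := τ x)) isOpen_univ
        (Set.subset_univ _)
      have h1 : b x = T.symm gb x := by rw [hbeq x gb, hgb1 (τ x) rfl, mul_one]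
      have h2 : |T.symm gb x| ≤ ‖T.symm gb‖ := by
        have := (T.symm gb).toBCF.norm_coe_le_norm x
        simpa [ZeroAtInftyContinuousMap.norm_toBCF_eq_norm] using this
      have h3 : ‖T.symm gb‖ ≤ ‖Sc‖ * ‖gb‖ := by
        have := Sc.le_opNorm gb
        simpa [hSc] using this
      have h4 : ‖gb‖ ≤ 1 := by
        rw [← ZeroAtInftyContinuousMap.norm_toBCF_eq_norm]
        refine BoundedContinuousFunction.norm_le zero_le_one |>.mpr (fun z => ?_)
        show ‖gb z‖ ≤ 1
        rw [Real.norm_eq_abs, abs_of_nonneg (hgb01 z).1]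
        exact (hgb01 z).2
      have h5 : ‖Sc‖ * ‖gb‖ ≤ ‖Sc‖ := mul_le_of_le_one_right (norm_nonneg Sc) h4
      rw [h1]
      exact (le_abs_self _).trans (h2.trans (h3.trans h5))
    have hale : ∀ y, a y ≤ ‖Tc‖ := by
      intro y
      obtain ⟨fb, hfb01, hfb1, _⟩ := exists_bump (isCompact_singleton (x := σ y)) isOpen_univ
        (Set.subset_univ _)
      have h1 : a y = T fb y := by rw [haeq y fb, hfb1 (σ y) rfl, mul_one]
      have h2 : |T fb y| ≤ ‖T fb‖ := by
        have := (T fb).toBCF.norm_coe_le_norm y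
        simpa [ZeroAtInftyContinuousMap.norm_toBCF_eq_norm] using this
      have h3 : ‖T fb‖ ≤ ‖Tc‖ * ‖fb‖ := by
        have := Tc.le_opNorm fb
        simpa [hTc] using this
      have h4 : ‖fb‖ ≤ 1 := by
        rw [← ZeroAtInftyContinuousMap.norm_toBCF_eq_norm]
        refine BoundedContinuousFunction.norm_le zero_le_one |>.mpr (fun z => ?_)
        show ‖fb z‖ ≤ 1
        rw [Real.norm_eq_abs, abs_of_nonneg (hfb01 z).1]
        exact (hfb01 z).2
      have h5 : ‖Tc‖ * ‖fb‖ ≤ ‖Tc‖ := mul_le_of_le_one_right (norm_nonneg Tc) h4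
      rw [h1]
      exact (le_abs_self _).trans (h2.trans (h3.trans h5))
    have hM'pos : 0 < ‖Sc‖ := lt_of_lt_of_le (hbpos (σ hYne.some)) (hble (σ hYne.some))
    refine ⟨(a, e), ⟨hac, ⟨1 / ‖Sc‖, by positivity, fun y => ?_⟩, ⟨‖Tc‖, hale⟩,
      fun f y => haeq y f⟩, ?_⟩
    · rw [div_le_iff₀ hM'pos]
      calc (1:ℝ) = a y * b (σ y) := ((hid2 y).2).symm
        _ ≤ a y * ‖Sc‖ := mul_le_mul_of_nonneg_left (hble (σ y)) (hapos y).le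
    · rintro ⟨a', e'⟩ ⟨hqc, ⟨c', hc', hclb⟩, _, hqrep⟩
      have hkey : ∀ y : Y, e' y = σ y ∧ a' y = a y := by
        intro y
        have hyy : ∀ f : C₀(X, ℝ), a' y * f (e' y) = a y * f (σ y) := by
          intro f
          rw [← hqrep f y, ← haeq y f]
        exact point_unique (lt_of_lt_of_le hc' (hclb y)) (hapos y) hyy
      simp only [Prod.mk.injEq]
      constructor
      · funext y; exact (hkey y).2
      · apply Homeomorph.ext
        intro y
        exact (hkey y).1
end
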